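/- For a POVM {Π_i}, S_C(ρ) = ln(dim H) if and only if p_i = V_i / dim H for all i, where p_i = tr(Π_i ρ) and V_i = tr(Π_i). -/

import Mathlib

open scoped Matrix ComplexOrder

private lemma trace_conjT_mul_self_re (M : Matrix n n ℂ) [Fintype n] :
    ((Mᴴ * M).trace).re = ∑ j, ∑ i, Complex.normSq (M i j) := by
  simp only [Matrix.trace, Matrix.diag, Matrix.mul_apply, Matrix.conjTranspose_apply,
    Complex.re_sum]
  refine Finset.sum_congr rfl fun j _ => Finset.sum_congr rfl fun i _ => ?_
  rw [Complex.star_def, ← Complex.normSq_eq_conj_mul_self, Complex.ofReal_re]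

private lemma trace_conjT_mul_self_re_nonneg (M : Matrix n n ℂ) [Fintype n] :
    0 ≤ ((Mᴴ * M).trace).re := by
  rw [trace_conjT_mul_self_re]
  exact Finset.sum_nonneg fun j _ => Finset.sum_nonneg fun i _ => Complex.normSq_nonneg _

private lemma eq_zero_of_trace_conjT_mul_self (M : Matrix n n ℂ) [Fintype n]
    (h : ((Mᴴ * M).trace).re = 0) : M = 0 := by
  rw [trace_conjT_mul_self_re] at h
  ext i j
  have h1 : ∀ j ∈ Finset.univ, (0:ℝ) ≤ ∑ i, Complex.normSq (M i j) := by
    intro j _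
    exact Finset.sum_nonneg fun i _ => Complex.normSq_nonneg _
  have h2 := (Finset.sum_eq_zero_iff_of_nonneg h1).mp h j (Finset.mem_univ j)
  have h3 := (Finset.sum_eq_zero_iff_of_nonneg (fun i _ => Complex.normSq_nonneg _)).mp h2 i
    (Finset.mem_univ i)
  simpa using Complex.normSq_eq_zero.mp h3


open scoped MatrixOrder in
private lemma Matrix.posSemidef_iff_eq_transpose_mul_self {n : Type*} [Fintype n] [DecidableEq n]
    {A : Matrix n n ℂ} : A.PosSemidef ↔ ∃ B : Matrix n n ℂ, A = Bᴴ * B := by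
  constructor
  · intro hA
    obtain ⟨B, hB⟩ := CStarAlgebra.nonneg_iff_eq_star_mul_self.mp hA.nonneg
    exact ⟨B, hB⟩
  · rintro ⟨B, rfl⟩
    exact Matrix.posSemidef_conjTranspose_mul_self B

private lemma pt_ineq (a b : ℝ) (ha : 0 ≤ a) (hb : 0 ≤ b) (hab : b = 0 → a = 0) :
    0 ≤ a * Real.log (a / b) - (a - b) ∧
      (a * Real.log (a / b) - (a - b) = 0 ↔ a = b) := by
  rcases eq_or_lt_of_le hb with hb0 | hbpos
  · have ha0 : a = 0 := hab hb0.symm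
    simp [ha0, ← hb0]
  rcases eq_or_lt_of_le ha with ha0 | hapos
  · constructor
    · simp [← ha0]; linarith
    · simp [← ha0]
      constructor
      · intro h; linarith
      · intro h; linarith
  · have hba : 0 < b / a := div_pos hbpos hapos
    have hlog : Real.log (a / b) = -Real.log (b / a) := by
      rw [← Real.log_inv, inv_div]
    constructor
    · have h1 := Real.log_le_sub_one_of_pos hba
      have h2 : a * Real.log (b / a) ≤ a * (b / a - 1) :=
        mul_le_mul_of_nonneg_left h1 ha
      have h3 : a * (b / a - 1) = b - a := by field_simp
      rw [hlog]
      linarith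
    · constructor
      · intro h
        by_contra hne
        have hne' : b / a ≠ 1 := by
          intro h1
          exact hne (by field_simp at h1; linarith)
        have h1 := Real.log_lt_sub_one_of_pos hba hne'
        have h2 : a * Real.log (b / a) < a * (b / a - 1) :=
          mul_lt_mul_of_pos_left h1 hapos
        have h3 : a * (b / a - 1) = b - a := by field_simp
        rw [hlog] at h
        nlinarith
      · intro h
        subst h
        simp [div_self (ne_of_gt hapos)]

private lemma core {ι : Type*} [Fintype ι] (a b : ι → ℝ) (ha : ∀ i, 0 ≤ a i)
    (hb : ∀ i, 0 ≤ b i) (hab : ∀ i, b i = 0 → a i = 0)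
    (hsa : ∑ i, a i = 1) (hsb : ∑ i, b i = 1) :
    ∑ i, a i * Real.log (a i / b i) = 0 ↔ ∀ i, a i = b i := by
  have key : ∀ i, 0 ≤ a i * Real.log (a i / b i) - (a i - b i) :=
    fun i => (pt_ineq (a i) (b i) (ha i) (hb i) (hab i)).1
  have hsum : ∑ i, (a i * Real.log (a i / b i) - (a i - b i))
      = ∑ i, a i * Real.log (a i / b i) := by
    rw [Finset.sum_sub_distrib, Finset.sum_sub_distrib, hsa, hsb]
    ring
  constructor
  · intro h
    have h0 : ∑ i, (a i * Real.log (a i / b i) - (a i - b i)) = 0 := by rw [hsum, h]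
    have := (Finset.sum_eq_zero_iff_of_nonneg (fun i _ => key i)).mp h0
    intro i
    exact (pt_ineq (a i) (b i) (ha i) (hb i) (hab i)).2.mp (this i (Finset.mem_univ i))
  · intro h
    refine Finset.sum_eq_zero fun i _ => ?_
    have := (pt_ineq (a i) (b i) (ha i) (hb i) (hab i)).2.mpr (h i)
    linarith [h i]

theorem obs_entropy_eq_log_dim_iff
    {n : Type*} [Fintype n] [DecidableEq n]
    {ι : Type*} [Fintype ι]
    (ρ : Matrix n n ℂ) (hρ : ρ.PosSemidef) (hρ1 : ρ.trace = 1)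
    (Q : ι → Matrix n n ℂ)
    (hQ : ∀ i, (Q i).PosSemidef)
    (hQsum : ∑ i, Q i = 1) :
    -∑ i, (Q i * ρ).trace.re * Real.log ((Q i * ρ).trace.re / (Q i).trace.re)
        = Real.log (Fintype.card n)
      ↔ ∀ i, (Q i * ρ).trace.re = (Q i).trace.re / (Fintype.card n) := by
  -- n is nonempty
  have hne : Nonempty n := by
    by_contra h
    rw [not_nonempty_iff] at h
    rw [Matrix.trace_eq_zero_of_isEmpty] at hρ1
    exact one_ne_zero hρ1.symm
  set d : ℝ := (Fintype.card n : ℝ) with hd_def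
  have hd : 0 < d := by
    rw [hd_def]
    exact_mod_cast Fintype.card_pos (α := n)
  obtain ⟨C, hC⟩ := Matrix.posSemidef_iff_eq_transpose_mul_self.mp hρ
  set p : ι → ℝ := fun i => (Q i * ρ).trace.re with hp_def
  set V : ι → ℝ := fun i => (Q i).trace.re with hV_def
  -- trace rewriting
  have htr : ∀ i, (Q i * ρ).trace = ((C * (Classical.choose
      (Matrix.posSemidef_iff_eq_transpose_mul_self.mp (hQ i)))ᴴ)ᴴ *
      (C * (Classical.choose (Matrix.posSemidef_iff_eq_transpose_mul_self.mp (hQ i)))ᴴ)).trace := by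
    intro i
    set B := Classical.choose (Matrix.posSemidef_iff_eq_transpose_mul_self.mp (hQ i)) with hB_def
    have hB : Q i = Bᴴ * B := Classical.choose_spec (Matrix.posSemidef_iff_eq_transpose_mul_self.mp (hQ i))
    rw [hB, hC, Matrix.conjTranspose_mul, Matrix.conjTranspose_conjTranspose]
    simp only [Matrix.mul_assoc]
    rw [Matrix.trace_mul_comm]
    simp only [Matrix.mul_assoc]
  have hpnn : ∀ i, 0 ≤ p i := by
    intro i
    rw [hp_def]
    simp only []
    rw [htr i]
    exact trace_conjT_mul_self_re_nonneg _
  have hVnn : ∀ i, 0 ≤ V i := by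
    intro i
    obtain ⟨B, hB⟩ := Matrix.posSemidef_iff_eq_transpose_mul_self.mp (hQ i)
    rw [hV_def]; simp only []
    rw [hB]
    exact trace_conjT_mul_self_re_nonneg _
  have hV0 : ∀ i, V i = 0 → p i = 0 := by
    intro i h
    obtain ⟨B, hB⟩ := Matrix.posSemidef_iff_eq_transpose_mul_self.mp (hQ i)
    rw [hV_def] at h; simp only [] at h
    rw [hB] at h
    have hB0 : B = 0 := eq_zero_of_trace_conjT_mul_self _ h
    rw [hp_def]; simp only []
    rw [hB, hB0]
    simp
  have hsp : ∑ i, p i = 1 := by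
    rw [hp_def]; simp only []
    rw [← Complex.re_sum, ← Matrix.trace_sum, ← Finset.sum_mul, hQsum, one_mul, hρ1]
    simp
  have hsV : ∑ i, V i = d := by
    rw [hV_def]; simp only []
    rw [← Complex.re_sum, ← Matrix.trace_sum, hQsum, Matrix.trace_one]
    simp [hd_def]
  have hbnn : ∀ i, 0 ≤ V i / d := fun i => div_nonneg (hVnn i) hd.le
  have hab : ∀ i, V i / d = 0 → p i = 0 := by
    intro i h
    rcases div_eq_zero_iff.mp h with h' | h'
    · exact hV0 i h'
    · exact absurd h' hd.ne'
  have hsb : ∑ i, V i / d = 1 := by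
    rw [← Finset.sum_div, hsV, div_self hd.ne']
  have hcore := core p (fun i => V i / d) hpnn hbnn hab hsp hsb
  have hsplit : ∀ i, p i * Real.log (p i / (V i / d))
      = p i * Real.log (p i / V i) + p i * Real.log d := by
    intro i
    rcases eq_or_lt_of_le (hpnn i) with h0 | hpos
    · simp [← h0]
    · have hVpos : 0 < V i := by
        rcases eq_or_lt_of_le (hVnn i) with h0 | h
        · exact absurd (hV0 i h0.symm) (by linarith)
        · exact h
      have e : p i / (V i / d) = (p i / V i) * d := by
        field_simp
      rw [e, Real.log_mul (by positivity) hd.ne', mul_add]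
  have hsum2 : ∑ i, p i * Real.log (p i / (V i / d))
      = (∑ i, p i * Real.log (p i / V i)) + Real.log d := by
    rw [Finset.sum_congr rfl (fun i _ => hsplit i), Finset.sum_add_distrib,
      ← Finset.sum_mul, hsp, one_mul]
  rw [show Real.log (Fintype.card n) = Real.log d from rfl]
  rw [← hcore]
  constructor <;> intro h <;> linarith [hsum2]
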